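/- Let h = f/g with f, g ∈ ℤ[x], gcd(f,g)=1, #f, #g ≤ T, and ‖f‖_∞, ‖g‖_∞ ≤ C. Let β be an integer with β ≥ ⌈√(2T)·C⌉, g(β) ≠ 0, g(β+1) ≠ 0. If f₁, g₁ ∈ ℤ[x] satisfy the same bounds T and C, and f(β)g₁(β) = f₁(β)g(β) and f(β+1)g₁(β+1) = f₁(β+1)g(β+1), then f·g₁ = f₁·g as polynomials. -/

import Mathlib

open Polynomial Finset

lemma my_coeff_mul_bound (f g : Polynomial ℤ) (T C : ℕ)
    (hT : f.support.card ≤ T) (hf : ∀ i, |f.coeff i| ≤ (C:ℤ))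
    (hg : ∀ i, |g.coeff i| ≤ (C:ℤ)) (k : ℕ) :
    |(f*g).coeff k| ≤ (T:ℤ) * (C:ℤ)^2 := by
  rw [Polynomial.coeff_mul]
  have hCnn : (0:ℤ) ≤ C := Int.natCast_nonneg C
  calc |∑ x ∈ Finset.HasAntidiagonal.antidiagonal k, f.coeff x.1 * g.coeff x.2|
      ≤ ∑ x ∈ Finset.HasAntidiagonal.antidiagonal k, |f.coeff x.1 * g.coeff x.2| :=
        Finset.abs_sum_le_sum_abs _ _
    _ ≤ ∑ x ∈ Finset.HasAntidiagonal.antidiagonal k, (if x.1 ∈ f.support then (C:ℤ)^2 else 0) := by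
        apply Finset.sum_le_sum
        intro x _
        by_cases h : x.1 ∈ f.support
        · simp only [h, if_true, abs_mul, sq]
          exact mul_le_mul (hf _) (hg _) (abs_nonneg _) hCnn
        · simp [Polynomial.notMem_support_iff.mp h]
    _ = ((Finset.HasAntidiagonal.antidiagonal k).filter (fun x => x.1 ∈ f.support)).card • (C:ℤ)^2 := by
        rw [← Finset.sum_filter, Finset.sum_const]
    _ ≤ (T:ℤ) * (C:ℤ)^2 := by
        rw [nsmul_eq_mul]
        apply mul_le_mul_of_nonneg_right _ (by positivity)
        have hcard : ((Finset.HasAntidiagonal.antidiagonal k).filter (fun x => x.1 ∈ f.support)).card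
            ≤ f.support.card := by
          apply Finset.card_le_card_of_injOn (fun x => x.1)
          · intro x hx
            exact (Finset.mem_filter.mp hx).2
          · rintro ⟨x1, x2⟩ hx ⟨y1, y2⟩ hy hxy
            have hx' := Finset.HasAntidiagonal.mem_antidiagonal.mp (Finset.mem_filter.mp hx).1
            have hy' := Finset.HasAntidiagonal.mem_antidiagonal.mp (Finset.mem_filter.mp hy).1
            simp only [Prod.mk.injEq] at hxy hx' hy' ⊢
            omega
        exact_mod_cast hcard.trans hT

lemma my_two_point (β B : ℤ) (hβ : 1 ≤ β) (hB : B < β * (β+1)) :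
    ∀ (n : ℕ) (p : Polynomial ℤ), p.natDegree ≤ n → (∀ i, |p.coeff i| ≤ B) →
    p.eval β = 0 → p.eval (β+1) = 0 → p = 0 := by
  intro n
  induction n with
  | zero =>
    intro p hd hc h1 h2
    rw [Polynomial.eq_C_of_natDegree_le_zero hd] at h1 ⊢
    simp at h1
    simp [h1]
  | succ n ih =>
    intro p hd hc h1 h2
    have hid := Polynomial.divX_mul_X_add p
    have e1 : p.divX.eval β * β + p.coeff 0 = 0 := by
      have := congrArg (Polynomial.eval β) hid
      simpa using this.trans h1
    have e2 : p.divX.eval (β+1) * (β+1) + p.coeff 0 = 0 := by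
      have := congrArg (Polynomial.eval (β+1)) hid
      simpa using this.trans h2
    have d1 : β ∣ p.coeff 0 := ⟨-p.divX.eval β, by linarith [e1]⟩
    have d2 : (β+1) ∣ p.coeff 0 := ⟨-p.divX.eval (β+1), by linarith [e2]⟩
    have hco : IsCoprime β (β+1) := ⟨-1, 1, by ring⟩
    have dmul : β * (β+1) ∣ p.coeff 0 := hco.mul_dvd d1 d2
    have h0 : p.coeff 0 = 0 :=
      Int.eq_zero_of_abs_lt_dvd dmul (lt_of_le_of_lt (hc 0) hB)
    have hβ0 : β ≠ 0 := by omega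
    have hβ1 : β + 1 ≠ 0 := by omega
    have hdiv : p.divX = 0 := by
      apply ih p.divX
      · rw [Polynomial.natDegree_divX_eq_natDegree_tsub_one]; omega
      · intro i; rw [Polynomial.coeff_divX]; exact hc _
      · rcases mul_eq_zero.mp (by linarith [e1, h0] : p.divX.eval β * β = 0) with h | h
        · exact h
        · exact absurd h hβ0
      · rcases mul_eq_zero.mp (by linarith [e2, h0] : p.divX.eval (β+1) * (β+1) = 0) with h | h
        · exact h
        · exact absurd h hβ1
    rw [← hid, hdiv, h0]
    simp

theorem stmt7 (f g f₁ g₁ : Polynomial ℤ) (T C : ℕ) (β : ℤ)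
    (hcop : IsRelPrime f g)
    (hTf : f.support.card ≤ T) (hTg : g.support.card ≤ T)
    (hTf₁ : f₁.support.card ≤ T) (hTg₁ : g₁.support.card ≤ T)
    (hfC : ∀ i, |f.coeff i| ≤ (C : ℤ)) (hgC : ∀ i, |g.coeff i| ≤ (C : ℤ))
    (hf₁C : ∀ i, |f₁.coeff i| ≤ (C : ℤ)) (hg₁C : ∀ i, |g₁.coeff i| ≤ (C : ℤ))
    (hβ : (β : ℝ) ≥ Real.sqrt (2 * (T : ℝ)) * (C : ℝ))
    (hgβ : g.eval β ≠ 0) (hgβ' : g.eval (β + 1) ≠ 0)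
    (hg₁β : g₁.eval β ≠ 0) (hg₁β' : g₁.eval (β + 1) ≠ 0)
    (heq1 : f.eval β * g₁.eval β = f₁.eval β * g.eval β)
    (heq2 : f.eval (β + 1) * g₁.eval (β + 1) = f₁.eval (β + 1) * g.eval (β + 1)) :
    f * g₁ = f₁ * g := by
  -- g ≠ 0, so T ≥ 1 and C ≥ 1
  have hg0 : g ≠ 0 := fun h => hgβ (by simp [h])
  have hT1 : 1 ≤ T := by
    have : 0 < g.support.card := Finset.card_pos.mpr (Polynomial.nonempty_support_iff.mpr hg0)
    omega
  have hC1 : 1 ≤ C := by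
    obtain ⟨i, hi⟩ := Polynomial.nonempty_support_iff.mpr hg0
    have h1 : 1 ≤ |g.coeff i| :=
      Int.one_le_abs (by exact_mod_cast Polynomial.mem_support_iff.mp hi)
    have := h1.trans (hgC i)
    exact_mod_cast this
  -- β ≥ 1
  have hsqrt2 : (1:ℝ) < Real.sqrt 2 := by
    rw [show (1:ℝ) = Real.sqrt 1 from Real.sqrt_one.symm]
    exact Real.sqrt_lt_sqrt (by norm_num) (by norm_num)
  have hstep : (1:ℝ) < Real.sqrt (2 * (T:ℝ)) * (C:ℝ) := by
    have h2T : Real.sqrt 2 ≤ Real.sqrt (2 * (T:ℝ)) := by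
      apply Real.sqrt_le_sqrt
      have : (1:ℝ) ≤ (T:ℝ) := by exact_mod_cast hT1
      nlinarith
    have hC : (1:ℝ) ≤ (C:ℝ) := by exact_mod_cast hC1
    nlinarith [Real.sqrt_nonneg 2]
  have hβ1 : 1 ≤ β := by
    have : (1:ℝ) < (β:ℝ) := lt_of_lt_of_le hstep hβ
    exact_mod_cast le_of_lt this
  -- β^2 ≥ 2 T C^2
  have hβsq : (2 * (T:ℤ) * (C:ℤ)^2) ≤ β^2 := by
    have h0 : (0:ℝ) ≤ Real.sqrt (2 * (T:ℝ)) * (C:ℝ) := by positivity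
    have hsq : (Real.sqrt (2 * (T:ℝ)) * (C:ℝ))^2 ≤ (β:ℝ)^2 := by
      nlinarith
    rw [mul_pow, Real.sq_sqrt (by positivity)] at hsq
    have : (2 * (T:ℝ) * (C:ℝ)^2) ≤ (β:ℝ)^2 := hsq
    exact_mod_cast this
  set B : ℤ := 2 * (T:ℤ) * (C:ℤ)^2 with hBdef
  have hB : B < β * (β + 1) := by nlinarith
  set p : Polynomial ℤ := f * g₁ - f₁ * g with hpdef
  have hcoeff : ∀ i, |p.coeff i| ≤ B := by
    intro i
    have h1 := my_coeff_mul_bound f g₁ T C hTf hfC hg₁C i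
    have h2 := my_coeff_mul_bound f₁ g T C hTf₁ hf₁C hgC i
    have : |p.coeff i| ≤ |(f * g₁).coeff i| + |(f₁ * g).coeff i| := by
      rw [hpdef, Polynomial.coeff_sub]
      exact abs_sub _ _
    rw [hBdef]; linarith
  have hev1 : p.eval β = 0 := by
    simp only [hpdef, Polynomial.eval_sub, Polynomial.eval_mul]
    rw [heq1]; ring
  have hev2 : p.eval (β + 1) = 0 := by
    simp only [hpdef, Polynomial.eval_sub, Polynomial.eval_mul]
    rw [heq2]; ring
  have := my_two_point β B hβ1 hB p.natDegree p le_rfl hcoeff hev1 hev2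
  exact sub_eq_zero.mp this
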